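/- Let D and D' be datasets over two finite attribute domains I and J, where D' is obtained from D by adding one record with values (x, y). For a dataset with n records, let a_i (resp. b_j) denote the count of records with first attribute value i (resp. second attribute value j), and α_{ij} the count of records with values (i,j). Define InDif(D) = Σ_{i,j} |a_i b_j / n − α_{ij}|. Then |InDif(D') − InDif(D)| ≤ 4. -/

import Mathlib

open Multiset

/-- The Independent Difference metric: the ℓ1 distance between the empirical
two-way marginal counts and the product of one-way marginal counts (scaled). -/
noncomputable def InDif {I J : Type*} [Fintype I] [Fintype J]
    [DecidableEq I] [DecidableEq J] (D : Multiset (I × J)) : ℝ :=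
  ∑ i : I, ∑ j : J,
    |((D.countP (fun r => r.1 = i) : ℝ) * (D.countP (fun r => r.2 = j) : ℝ)) / (D.card : ℝ)
      - (D.count (i, j) : ℝ)|

lemma sum_countP_eq_card {α β : Type*} [Fintype β] [DecidableEq β]
    (D : Multiset α) (f : α → β) :
    ∑ i : β, D.countP (fun r => f r = i) = Multiset.card D := by
  induction D using Multiset.induction_on with
  | empty => simp
  | cons a s ih =>
    simp only [countP_cons, Finset.sum_add_distrib, ih, card_cons]
    congr 1
    simp

lemma factor_sum {I J : Type*} [Fintype I] [Fintype J]
    (f : I → ℝ) (g : J → ℝ) (k : ℝ) :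
    ∑ i : I, ∑ j : J, f i * g j * k = (∑ i : I, f i) * (∑ j : J, g j) * k := by
  rw [Finset.sum_mul, Finset.sum_mul]
  refine Finset.sum_congr rfl fun i _ => ?_
  rw [Finset.mul_sum, Finset.sum_mul]

lemma abs_add_four (p q r s : ℝ) : |p + q + r + s| ≤ |p| + |q| + |r| + |s| := by
  calc |p + q + r + s| ≤ |p + q + r| + |s| := abs_add_le _ _
    _ ≤ (|p + q| + |r|) + |s| := by gcongr; exact abs_add_le _ _
    _ ≤ ((|p| + |q|) + |r|) + |s| := by gcongr; exact abs_add_le _ _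

theorem stmt_1 {I J : Type*} [Fintype I] [Fintype J] [DecidableEq I] [DecidableEq J]
    (D : Multiset (I × J)) (hn : 1 ≤ Multiset.card D) (x : I) (y : J) :
    |InDif ((x, y) ::ₘ D) - InDif D| ≤ 4 := by
  classical
  set n : ℝ := (Multiset.card D : ℝ) with hndef
  have hn0 : (1:ℝ) ≤ n := by rw [hndef]; exact_mod_cast hn
  have hnpos : (0:ℝ) < n := by linarith
  have hn1 : (0:ℝ) < n + 1 := by linarith
  set a : I → ℝ := fun i => (D.countP (fun r => r.1 = i) : ℝ) with hadef
  set b : J → ℝ := fun j => (D.countP (fun r => r.2 = j) : ℝ) with hbdef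
  set c : I → J → ℝ := fun i j => (D.count (i, j) : ℝ) with hcdef
  set P : I → ℝ := fun i => if x = i then 1 else 0 with hPdef
  set Q : J → ℝ := fun j => if y = j then 1 else 0 with hQdef
  have ha : ∀ i, 0 ≤ a i := fun i => by simp only [hadef]; positivity
  have hb : ∀ j, 0 ≤ b j := fun j => by simp only [hbdef]; positivity
  have hP : ∀ i, 0 ≤ P i := fun i => by simp only [hPdef]; split <;> norm_num
  have hQ : ∀ j, 0 ≤ Q j := fun j => by simp only [hQdef]; split <;> norm_num
  have sumA : ∑ i : I, a i = n := by
    simp only [hadef, hndef]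
    exact_mod_cast sum_countP_eq_card D (fun r => r.1)
  have sumB : ∑ j : J, b j = n := by
    simp only [hbdef, hndef]
    exact_mod_cast sum_countP_eq_card D (fun r => r.2)
  have sumP : ∑ i : I, P i = 1 := by simp [hPdef]
  have sumQ : ∑ j : J, Q j = 1 := by simp [hQdef]
  -- counts of the extended dataset
  have hcard' : ((Multiset.card ((x,y) ::ₘ D) : ℕ) : ℝ) = n + 1 := by
    simp [hndef]
  have ha' : ∀ i, ((((x,y) ::ₘ D).countP (fun r => r.1 = i) : ℕ) : ℝ) = a i + P i := by
    intro i
    rw [countP_cons]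
    by_cases h : x = i <;> simp [hPdef, h, hadef]
  have hb' : ∀ j, ((((x,y) ::ₘ D).countP (fun r => r.2 = j) : ℕ) : ℝ) = b j + Q j := by
    intro j
    rw [countP_cons]
    by_cases h : y = j <;> simp [hQdef, h, hbdef]
  have hc' : ∀ i j, ((((x,y) ::ₘ D).count (i, j) : ℕ) : ℝ) = c i j + P i * Q j := by
    intro i j
    rw [count_cons]
    by_cases hx : x = i <;> by_cases hy : y = j <;>
      simp [hPdef, hQdef, hx, hy, Prod.ext_iff, hcdef, eq_comm]
  -- rewrite InDif of the extended dataset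
  have hInDif' : InDif ((x,y) ::ₘ D) =
      ∑ i : I, ∑ j : J, |(a i + P i) * (b j + Q j) / (n + 1) - (c i j + P i * Q j)| := by
    unfold InDif
    refine Finset.sum_congr rfl fun i _ => Finset.sum_congr rfl fun j _ => ?_
    rw [ha', hb', hc', hcard']
  have hInDif : InDif D = ∑ i : I, ∑ j : J, |a i * b j / n - c i j| := rfl
  rw [hInDif', hInDif]
  -- combine sums and bound termwise
  rw [← Finset.sum_sub_distrib]
  simp_rw [← Finset.sum_sub_distrib]
  calc |∑ i : I, ∑ j : J,
        (|(a i + P i) * (b j + Q j) / (n + 1) - (c i j + P i * Q j)| - |a i * b j / n - c i j|)|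
      ≤ ∑ i : I, ∑ j : J,
        (a i * b j * (1 / (n * (n+1))) + P i * b j * (1/(n+1)) + a i * Q j * (1/(n+1))
          + P i * Q j * (n/(n+1))) := by
        refine (Finset.abs_sum_le_sum_abs _ _).trans (Finset.sum_le_sum fun i _ => ?_)
        refine (Finset.abs_sum_le_sum_abs _ _).trans (Finset.sum_le_sum fun j _ => ?_)
        refine (abs_abs_sub_abs_le_abs_sub _ _).trans ?_
        have hid : (a i + P i) * (b j + Q j) / (n + 1) - (c i j + P i * Q j)
            - (a i * b j / n - c i j)
            = (-(a i * b j * (1 / (n * (n+1))))) + P i * b j * (1/(n+1))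
              + a i * Q j * (1/(n+1)) + P i * Q j * (1/(n+1) - 1) := by
          field_simp
          ring
        rw [hid]
        have h1 : |(-(a i * b j * (1 / (n * (n+1)))))| = a i * b j * (1 / (n * (n+1))) := by
          rw [abs_neg, abs_of_nonneg]
          have := ha i; have := hb j; positivity
        have h2 : |P i * b j * (1/(n+1))| = P i * b j * (1/(n+1)) := by
          rw [abs_of_nonneg]
          have := hP i; have := hb j; positivity
        have h3 : |a i * Q j * (1/(n+1))| = a i * Q j * (1/(n+1)) := by
          rw [abs_of_nonneg]
          have := ha i; have := hQ j; positivity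
        have h4 : |P i * Q j * (1/(n+1) - 1)| = P i * Q j * (n/(n+1)) := by
          have habs : |(1/(n+1) - 1 : ℝ)| = n/(n+1) := by
            rw [abs_of_nonpos (by rw [sub_nonpos, div_le_one hn1]; linarith)]
            field_simp
            ring
          rw [abs_mul, abs_mul, habs, abs_of_nonneg (hP i), abs_of_nonneg (hQ j)]
        calc |(-(a i * b j * (1 / (n * (n+1))))) + P i * b j * (1/(n+1))
              + a i * Q j * (1/(n+1)) + P i * Q j * (1/(n+1) - 1)|
            ≤ |(-(a i * b j * (1 / (n * (n+1)))))| + |P i * b j * (1/(n+1))|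
              + |a i * Q j * (1/(n+1))| + |P i * Q j * (1/(n+1) - 1)| := abs_add_four _ _ _ _
          _ = a i * b j * (1 / (n * (n+1))) + P i * b j * (1/(n+1))
              + a i * Q j * (1/(n+1)) + P i * Q j * (n/(n+1)) := by
              rw [h1, h2, h3, h4]
    _ = 4 * n / (n + 1) := by
        simp only [Finset.sum_add_distrib, factor_sum]
        rw [sumA, sumB, sumP, sumQ]
        field_simp
        ring
    _ ≤ 4 := by
        rw [div_le_iff₀ hn1]; linarith
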